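/- In an EAMP CG G' over W ∪ ε, a node B ∈ W that is neither an endpoint nor a triplex node of a route ρ, and that participates in no undirected edges, can only appear in ρ in one of the configurations A → B → C, A ← B ← C, or A ← B → C; replacing these respectively by A → C, A ← C, and A ← ε^B → C yields a route in the marginalized graph [G']_{\{B\}}, and if ρ is Z-open with Z ⊆ W \ {B} then the resulting route is Z-open in [G']_{\{B\}}. -/

import Mathlib

/- Mixed graphs with directed and undirected edges. -/
structure MixedGraph (γ : Type*) where
  dir : γ → γ → Prop
  undir : γ → γ → Prop
  undir_symm : ∀ a b, undir a b → undir b a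

namespace MixedGraph

variable {β : Type*} (G : MixedGraph β)

/-- Two nodes are adjacent if joined by some edge. -/
def adj (a b : β) : Prop := G.dir a b ∨ G.dir b a ∨ G.undir a b

/-- The graph is simple: no loops and at most one edge between any pair. -/
def Simple : Prop :=
  (∀ a, ¬ G.dir a a) ∧ (∀ a, ¬ G.undir a a) ∧
  (∀ a b, G.dir a b → ¬ G.dir b a) ∧ (∀ a b, G.dir a b → ¬ G.undir a b)

/-- A semidirected cycle: a cycle whose first edge is directed and whose other
edges are directed or undirected (all pointing forwards). -/
def HasSemidirectedCycle : Prop :=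
  ∃ (n : ℕ) (f : Fin (n + 2) → β),
    f 0 = f (Fin.last (n + 1)) ∧ G.dir (f 0) (f 1) ∧
    ∀ i : Fin (n + 1), G.dir (f i.castSucc) (f i.succ) ∨ G.undir (f i.castSucc) (f i.succ)

/-- A chain graph: a simple graph with no semidirected cycle. -/
def IsChainGraph : Prop := G.Simple ∧ ¬ G.HasSemidirectedCycle

/-- A DAG: a chain graph with no undirected edges. -/
def IsDAG : Prop := G.IsChainGraph ∧ ∀ a b, ¬ G.undir a b

/-- Parents of a set of nodes. -/
def pa (X : Set β) : Set β := {v | v ∉ X ∧ ∃ x ∈ X, G.dir v x}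

/-- Strict ascendants of a set of nodes (strictly descending route to the set). -/
def san (W : Set β) : Set β := {v | v ∉ W ∧ ∃ w ∈ W, Relation.TransGen G.dir v w}

/-- B is a triplex node between A and C: A → B ← C, A → B − C, or A − B ← C. -/
def triplex (A B C : β) : Prop :=
  (G.dir A B ∧ G.dir C B) ∨ (G.dir A B ∧ G.undir B C) ∨ (G.undir A B ∧ G.dir C B)

/-- B is a non-triplex node between A and C. -/
def nontriplex (A B C : β) : Prop :=
  G.adj A B ∧ G.adj B C ∧ ¬ G.triplex A B C

/-- A route: a nonempty sequence of consecutively adjacent nodes. -/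
def IsRoute (l : List β) : Prop := l ≠ [] ∧ l.Chain' G.adj

/-- A path that is open given the determined set `D` (AMP path-based semantics). -/
def AMPOpenPath (D : Set β) (l : List β) : Prop :=
  G.IsRoute l ∧ l.Nodup ∧
  (∀ A B C, [A, B, C] <:+: l → G.triplex A B C → B ∈ D ∪ G.san D) ∧
  (∀ A B C, [A, B, C] <:+: l → G.nontriplex A B C → B ∈ D →
    (G.undir A B ∧ G.undir B C ∧ ∃ p ∈ G.pa {B}, p ∉ D))

/-- A route that is open given the determined set `D` (AMP route-based semantics). -/
def AMPOpenRoute (D : Set β) (l : List β) : Prop :=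
  G.IsRoute l ∧
  (∀ A B C, [A, B, C] <:+: l → G.triplex A B C → B ∈ D) ∧
  (∀ A B C, [A, B, C] <:+: l → G.nontriplex A B C → B ∉ D)

/-- AMP separation (path-based) of X and Y given determined set D. -/
def AMPSep (D X Y : Set β) : Prop :=
  ∀ (l : List β) (x y : β), x ∈ X → y ∈ Y → l.head? = some x → l.getLast? = some y →
    ¬ G.AMPOpenPath D l

/-- AMP separation (route-based) of X and Y given determined set D. -/
def AMPSepRoute (D X Y : Set β) : Prop :=
  ∀ (l : List β) (x y : β), x ∈ X → y ∈ Y → l.head? = some x → l.getLast? = some y →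
    ¬ G.AMPOpenRoute D l

/-- `s` is a collider section of the route `l`: a maximal undirected subroute of `l`
entered by arrowheads at both ends. -/
def IsColliderSection (l s : List β) : Prop :=
  s ≠ [] ∧ List.Chain' G.undir s ∧
  ∃ pre post A C, l = pre ++ s ++ post ∧
    pre.getLast? = some A ∧ post.head? = some C ∧
    (∀ b, s.head? = some b → G.dir A b) ∧ (∀ b, s.getLast? = some b → G.dir C b) ∧
    (∀ a b, pre.getLast? = some a → s.head? = some b → ¬ G.undir a b) ∧
    (∀ a b, s.getLast? = some a → post.head? = some b → ¬ G.undir a b)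

/-- `s` is a non-collider section of the route `l`: a maximal undirected subroute of `l`
not entered by arrowheads at both ends. -/
def IsNonColliderSection (l s : List β) : Prop :=
  s ≠ [] ∧ List.Chain' G.undir s ∧
  ∃ pre post, l = pre ++ s ++ post ∧
    (∀ a b, pre.getLast? = some a → s.head? = some b → ¬ G.undir a b) ∧
    (∀ a b, s.getLast? = some a → post.head? = some b → ¬ G.undir a b) ∧
    ¬ ((∃ A, pre.getLast? = some A ∧ ∀ b, s.head? = some b → G.dir A b) ∧
       (∃ C, post.head? = some C ∧ ∀ b, s.getLast? = some b → G.dir C b))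

/-- A route that is open given the determined set `D` (LWF semantics). -/
def LWFOpenRoute (D : Set β) (l : List β) : Prop :=
  G.IsRoute l ∧
  (∀ s, G.IsColliderSection l s → ∃ x ∈ s, x ∈ D) ∧
  (∀ s, G.IsNonColliderSection l s → ∀ x ∈ s, x ∉ D)

/-- LWF separation of X and Y given determined set D. -/
def LWFSep (D X Y : Set β) : Prop :=
  ∀ (l : List β) (x y : β), x ∈ X → y ∈ Y → l.head? = some x → l.getLast? = some y →
    ¬ G.LWFOpenRoute D l

/-- Closure of Z under a set `det` of deterministic relationships: `(S, a) ∈ det`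
means that `a` is a function of `S`. -/
inductive Determined (det : Set (Set β × β)) (Z : Set β) : β → Prop
  | base : ∀ a, a ∈ Z → Determined det Z a
  | step : ∀ (S : Set β) (a : β), (S, a) ∈ det → (∀ b ∈ S, Determined det Z b) →
      Determined det Z a

/-- The set D(Z) of nodes determined by Z. -/
def DSet (det : Set (Set β × β)) (Z : Set β) : Set β := {a | Determined det Z a}

end MixedGraph

section EAMP

variable {α : Type*}

/-- Directed edges of the EAMP CG: `inl` nodes are the original nodes,
`inr` nodes are the error nodes. -/
def eampDir (G : MixedGraph α) : (α ⊕ α) → (α ⊕ α) → Prop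
  | Sum.inl x, Sum.inl y => G.dir x y
  | Sum.inr x, Sum.inl y => x = y
  | _, _ => False

/-- Undirected edges of the EAMP CG: `ε^A − ε^B` for each `A − B` of G. -/
def eampUndir (G : MixedGraph α) : (α ⊕ α) → (α ⊕ α) → Prop
  | Sum.inr x, Sum.inr y => G.undir x y
  | _, _ => False

/-- The EAMP CG G' of an AMP CG G: add `ε^A → A` for each node A and replace
each undirected edge `A − B` by `ε^A − ε^B`. -/
def eamp (G : MixedGraph α) : MixedGraph (α ⊕ α) where
  dir := eampDir G
  undir := eampUndir G
  undir_symm := by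
    rintro (x | x) (y | y) h <;>
      simp only [eampUndir] at h ⊢ <;>
      first
        | exact h.elim
        | exact G.undir_symm _ _ h

/-- The parents of A in G, embedded as nodes of the EAMP CG. -/
def eampPa (G : MixedGraph α) (A : α) : Set (α ⊕ α) := {x | ∃ B, G.dir B A ∧ x = Sum.inl B}

/-- The deterministic relationships of the EAMP CG: each A is a function of
`pa_G(A) ∪ {ε^A}`, and each `ε^A` is a function of `pa_G(A) ∪ {A}`. -/
def eampDet (G : MixedGraph α) : Set (Set (α ⊕ α) × (α ⊕ α)) :=
  {p | (∃ A, p = (eampPa G A ∪ {Sum.inr A}, Sum.inl A)) ∨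
       (∃ A, p = (eampPa G A ∪ {Sum.inl A}, Sum.inr A))}

/-- Marginalize the node B out of G: add `A → C` for every pair `A → B`, `B → C`,
then delete B together with all edges it participates in. -/
def marg {β : Type*} (G : MixedGraph β) (B : β) : MixedGraph β where
  dir a c := a ≠ B ∧ c ≠ B ∧ (G.dir a c ∨ (G.dir a B ∧ G.dir B c))
  undir a c := a ≠ B ∧ c ≠ B ∧ G.undir a c
  undir_symm := by
    rintro a c ⟨h1, h2, h3⟩
    exact ⟨h2, h1, G.undir_symm _ _ h3⟩

/-- Marginalize a list of nodes out of G, one at a time. -/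
def margList {β : Type*} (G : MixedGraph β) (L : List β) : MixedGraph β := L.foldl marg G

/-- Directed edges of the DAG G'': those of G' among `V ∪ ε`, plus
`ε^A → S_{ε^Aε^B} ← ε^B` for each undirected edge `ε^A − ε^B` of G'. -/
def dagDir (G : MixedGraph α) : ((α ⊕ α) ⊕ Sym2 α) → ((α ⊕ α) ⊕ Sym2 α) → Prop
  | Sum.inl x, Sum.inl y => (eamp G).dir x y
  | Sum.inl (Sum.inr x), Sum.inr s => ∃ y, G.undir x y ∧ s = s(x, y)
  | _, _ => False

/-- The DAG G'' obtained from G' by replacing each `ε^A − ε^B` with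
`ε^A → S_{ε^Aε^B} ← ε^B`, where the selection nodes are fresh. -/
def dagOf (G : MixedGraph α) : MixedGraph ((α ⊕ α) ⊕ Sym2 α) where
  dir := dagDir G
  undir _ _ := False
  undir_symm := by intro a b h; exact h.elim

/-- The set S of selection nodes of G''. -/
def selNodes (G : MixedGraph α) : Set ((α ⊕ α) ⊕ Sym2 α) :=
  {v | ∃ x y, G.undir x y ∧ v = Sum.inr s(x, y)}

/-- The deterministic relationships of G'' (the same as those of G'). -/
def dagDet (G : MixedGraph α) : Set (Set ((α ⊕ α) ⊕ Sym2 α) × ((α ⊕ α) ⊕ Sym2 α)) :=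
  {p | ∃ q ∈ eampDet G, p = (Sum.inl '' q.1, Sum.inl q.2)}

/-- Structural characterization of EAMP CGs over `W ∪ ε`: a chain graph whose
undirected edges join only error nodes and whose error nodes have no incoming
directed edges. -/
def IsEAMPStruct (G : MixedGraph (α ⊕ α)) : Prop :=
  G.IsChainGraph ∧
  (∀ a b, G.undir a b → (∃ x, a = Sum.inr x) ∧ ∃ y, b = Sum.inr y) ∧
  (∀ a x, ¬ G.dir a (Sum.inr x))

/-- K is a connectivity component: a maximal set connected by undirected paths. -/
def IsConnComp {β : Type*} (G : MixedGraph β) (K : Set β) : Prop :=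
  ∃ a, K = {b | Relation.ReflTransGen G.undir a b}

end EAMP

section Stmt16Aux

open MixedGraph

variable {α : Type*}

/-- Hybrid graph: marg edges, plus the original `G'` directed edges at `Sum.inl B`. -/
def hyb (G' : MixedGraph (α ⊕ α)) (B : α) : MixedGraph (α ⊕ α) where
  dir u v := (marg G' (Sum.inl B)).dir u v ∨ ((u = Sum.inl B ∨ v = Sum.inl B) ∧ G'.dir u v)
  undir := G'.undir
  undir_symm := G'.undir_symm

open Classical in
/-- The route transformation eliminating `Sum.inl B`. -/
noncomputable def tr (G' : MixedGraph (α ⊕ α)) (B : α) : List (α ⊕ α) → List (α ⊕ α)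
  | [] => []
  | [x] => [x]
  | x :: y :: rest =>
    if y = Sum.inl B then
      if G'.dir x y then tr G' B (x :: rest)
      else
        match rest with
        | [] => [x, Sum.inr B]
        | C :: r' =>
          if G'.dir C y then tr G' B (x :: C :: r')
          else x :: tr G' B (Sum.inr B :: C :: r')
    else x :: tr G' B (y :: rest)
  termination_by l => l.length

variable (G' : MixedGraph (α ⊕ α)) (B : α)

lemma tr_nil : tr G' B [] = [] := by rw [tr.eq_def]

lemma tr_single (x : α ⊕ α) : tr G' B [x] = [x] := by rw [tr.eq_def]

lemma tr_cons_ne {y : α ⊕ α} (x : α ⊕ α) (rest : List (α ⊕ α)) (hy : y ≠ Sum.inl B) :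
    tr G' B (x :: y :: rest) = x :: tr G' B (y :: rest) := by
  rw [tr.eq_def]; simp [hy]

lemma tr_drop1 {x : α ⊕ α} (rest : List (α ⊕ α)) (hx : G'.dir x (Sum.inl B)) :
    tr G' B (x :: Sum.inl B :: rest) = tr G' B (x :: rest) := by
  rw [tr.eq_def]; simp [hx]

lemma tr_drop2 {x C : α ⊕ α} (r' : List (α ⊕ α)) (hx : ¬ G'.dir x (Sum.inl B))
    (hC : G'.dir C (Sum.inl B)) :
    tr G' B (x :: Sum.inl B :: C :: r') = tr G' B (x :: C :: r') := by
  rw [tr.eq_def]; simp [hx, hC]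

lemma tr_subst {x C : α ⊕ α} (r' : List (α ⊕ α)) (hx : ¬ G'.dir x (Sum.inl B))
    (hC : ¬ G'.dir C (Sum.inl B)) :
    tr G' B (x :: Sum.inl B :: C :: r') = x :: tr G' B (Sum.inr B :: C :: r') := by
  rw [tr.eq_def]; simp [hx, hC]

end Stmt16Aux
section Stmt16Basic
open MixedGraph
variable {α : Type*} {G' : MixedGraph (α ⊕ α)} {B : α}

lemma no1 (h : IsEAMPStruct G') {x : α ⊕ α} : ¬ G'.dir x x := h.1.1.1 x

lemma no2 (h : IsEAMPStruct G') {x y : α ⊕ α} (hxy : G'.dir x y) : ¬ G'.dir y x :=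
  h.1.1.2.2.1 x y hxy

lemma no3 (h : IsEAMPStruct G') {x y z : α ⊕ α} (h1 : G'.dir x y) (h2 : G'.dir y z) :
    ¬ G'.dir z x := by
  intro h3
  apply h.1.2
  refine ⟨2, ![x, y, z, x], ?_, ?_, ?_⟩
  · show x = ![x,y,z,x] (Fin.last 3); norm_num [Fin.last]
  · simpa using h1
  · intro i
    fin_cases i
    · exact Or.inl (by simpa using h1)
    · exact Or.inl (by simpa using h2)
    · exact Or.inl (by simpa using h3)

lemma noDU (h : IsEAMPStruct G') {x y : α ⊕ α} (hd : G'.dir x y) : ¬ G'.undir x y :=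
  h.1.1.2.2.2 x y hd

lemma noDirInr (h : IsEAMPStruct G') {v : α ⊕ α} {t : α} : ¬ G'.dir v (Sum.inr t) :=
  h.2.2 v t

lemma undir_inr (h : IsEAMPStruct G') {u v : α ⊕ α} (hu : G'.undir u v) :
    (∃ x, u = Sum.inr x) ∧ ∃ y, v = Sum.inr y := h.2.1 u v hu

lemma dir_ne_inr (h : IsEAMPStruct G') {u v : α ⊕ α} (hd : G'.dir u v) {t : α} :
    v ≠ Sum.inr t := by rintro rfl; exact noDirInr h hd

end Stmt16Basic
section Stmt16Hyb
open MixedGraph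
variable {α : Type*} {G' : MixedGraph (α ⊕ α)} {B : α}

lemma hdir_def {u v : α ⊕ α} : (hyb G' B).dir u v ↔
    (u ≠ Sum.inl B ∧ v ≠ Sum.inl B ∧ (G'.dir u v ∨ (G'.dir u (Sum.inl B) ∧ G'.dir (Sum.inl B) v)))
    ∨ ((u = Sum.inl B ∨ v = Sum.inl B) ∧ G'.dir u v) := Iff.rfl

lemma hundir_def {u v : α ⊕ α} : (hyb G' B).undir u v ↔ G'.undir u v := Iff.rfl

/-- case splitting for hybrid directed edges -/
lemma hdir_cases {u v : α ⊕ α} (hd : (hyb G' B).dir u v) :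
    G'.dir u v ∨ (G'.dir u (Sum.inl B) ∧ G'.dir (Sum.inl B) v) := by
  rcases hd with ⟨_, _, hc⟩ | ⟨_, hc⟩
  · exact hc
  · exact Or.inl hc

lemma hdir_of_dir (h : IsEAMPStruct G') {u v : α ⊕ α} (hd : G'.dir u v) :
    (hyb G' B).dir u v := by
  by_cases hu : u = Sum.inl B
  · exact Or.inr ⟨Or.inl hu, hd⟩
  by_cases hv : v = Sum.inl B
  · exact Or.inr ⟨Or.inr hv, hd⟩
  exact Or.inl ⟨hu, hv, Or.inl hd⟩

lemma hdir_chain (h : IsEAMPStruct G') {u v : α ⊕ α} (h1 : G'.dir u (Sum.inl B))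
    (h2 : G'.dir (Sum.inl B) v) : (hyb G' B).dir u v := by
  refine Or.inl ⟨?_, ?_, Or.inr ⟨h1, h2⟩⟩
  · rintro rfl; exact no1 h h1
  · rintro rfl; exact no1 h h2

lemma hdir_Bn_right {u : α ⊕ α} : (hyb G' B).dir u (Sum.inl B) ↔ G'.dir u (Sum.inl B) := by
  rw [hdir_def]; simp

lemma hdir_Bn_left {v : α ⊕ α} : (hyb G' B).dir (Sum.inl B) v ↔ G'.dir (Sum.inl B) v := by
  rw [hdir_def]; simp

lemma hundir_not_Bn_right (h : IsEAMPStruct G') {u : α ⊕ α} :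
    ¬ (hyb G' B).undir u (Sum.inl B) := by
  intro hu; obtain ⟨-, y, hy⟩ := undir_inr h (hundir_def.mp hu); exact absurd hy (by simp)

lemma hundir_not_Bn_left (h : IsEAMPStruct G') {v : α ⊕ α} :
    ¬ (hyb G' B).undir (Sum.inl B) v := by
  intro hu; obtain ⟨⟨y, hy⟩, -⟩ := undir_inr h (hundir_def.mp hu); exact absurd hy (by simp)

lemma hdir_no2 (h : IsEAMPStruct G') {u v : α ⊕ α} (hd : (hyb G' B).dir u v) :
    ¬ (hyb G' B).dir v u := by
  intro hd'
  rcases hdir_cases hd with h1 | ⟨h1, h2⟩ <;> rcases hdir_cases hd' with h3 | ⟨h3, h4⟩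
  · exact no2 h h1 h3
  · exact no3 h h1 h3 h4
  · exact no3 h h2 h3 h1
  · exact no2 h h2 h3

lemma hdir_not_inr (h : IsEAMPStruct G') {u : α ⊕ α} {t : α} :
    ¬ (hyb G' B).dir u (Sum.inr t) := by
  intro hd
  rcases hdir_cases hd with h1 | ⟨h1, h2⟩
  · exact noDirInr h h1
  · exact noDirInr h h2

lemma hdir_not_undir (h : IsEAMPStruct G') {u v : α ⊕ α} (hd : (hyb G' B).dir u v) :
    ¬ (hyb G' B).undir u v := by
  intro hu
  obtain ⟨-, y, rfl⟩ := undir_inr h (hundir_def.mp hu)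
  exact hdir_not_inr h hd

lemma hadj_irrefl (h : IsEAMPStruct G') {u : α ⊕ α} : ¬ (hyb G' B).adj u u := by
  rintro (hd | hd | hu)
  · rcases hdir_cases hd with h1 | ⟨h1, h2⟩
    · exact no1 h h1
    · exact no2 h h1 h2
  · rcases hdir_cases hd with h1 | ⟨h1, h2⟩
    · exact no1 h h1
    · exact no2 h h1 h2
  · exact h.1.1.2.1 u (hundir_def.mp hu)

/-- On pairs that are `G'`-adjacent, hybrid directed edges agree with `G'`. -/
lemma hdir_iff_of_adj (h : IsEAMPStruct G') {u v : α ⊕ α} (hadj : G'.adj u v) :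
    (hyb G' B).dir u v ↔ G'.dir u v := by
  constructor
  · intro hd
    rcases hdir_cases hd with h1 | ⟨h1, h2⟩
    · exact h1
    · rcases hadj with h3 | h3 | h3
      · exact h3
      · exact absurd h3 (no3 h h1 h2)
      · obtain ⟨-, y, rfl⟩ := undir_inr h h3; exact absurd h2 (noDirInr h)
  · exact hdir_of_dir h

lemma hadj_of_adj (h : IsEAMPStruct G') {u v : α ⊕ α} (hadj : G'.adj u v) :
    (hyb G' B).adj u v := by
  rcases hadj with h1 | h1 | h1
  · exact Or.inl (hdir_of_dir h h1)
  · exact Or.inr (Or.inl (hdir_of_dir h h1))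
  · exact Or.inr (Or.inr (hundir_def.mpr h1))

lemma G'adj_symm {u v : α ⊕ α} (hadj : G'.adj u v) : G'.adj v u := by
  rcases hadj with h1 | h1 | h1
  · exact Or.inr (Or.inl h1)
  · exact Or.inl h1
  · exact Or.inr (Or.inr (G'.undir_symm _ _ h1))

lemma htriplex_iff_of_adj (h : IsEAMPStruct G') {X Y Z : α ⊕ α} (h1 : G'.adj X Y)
    (h2 : G'.adj Y Z) : (hyb G' B).triplex X Y Z ↔ G'.triplex X Y Z := by
  unfold MixedGraph.triplex
  rw [hdir_iff_of_adj h h1, hdir_iff_of_adj h (G'adj_symm h2), hundir_def, hundir_def]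

lemma hnontriplex_of_adj (h : IsEAMPStruct G') {X Y Z : α ⊕ α} (h1 : G'.adj X Y)
    (h2 : G'.adj Y Z) (hnt : (hyb G' B).nontriplex X Y Z) : G'.nontriplex X Y Z :=
  ⟨h1, h2, fun ht => hnt.2.2 ((htriplex_iff_of_adj h h1 h2).mpr ht)⟩

/-- adjacency at `Sum.inl B` comes from a `G'` directed edge -/
lemma hadj_Bn_right (h : IsEAMPStruct G') {u : α ⊕ α} (hadj : (hyb G' B).adj u (Sum.inl B)) :
    G'.dir u (Sum.inl B) ∨ G'.dir (Sum.inl B) u := by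
  rcases hadj with h1 | h1 | h1
  · exact Or.inl (hdir_Bn_right.mp h1)
  · exact Or.inr (hdir_Bn_left.mp h1)
  · exact absurd h1 (hundir_not_Bn_right h)

lemma hadj_Bn_left (h : IsEAMPStruct G') {v : α ⊕ α} (hadj : (hyb G' B).adj (Sum.inl B) v) :
    G'.dir (Sum.inl B) v ∨ G'.dir v (Sum.inl B) := by
  rcases hadj with h1 | h1 | h1
  · exact Or.inl (hdir_Bn_left.mp h1)
  · exact Or.inr (hdir_Bn_right.mp h1)
  · exact absurd h1 (hundir_not_Bn_left h)

end Stmt16Hyb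
section Stmt16Marg
open MixedGraph
variable {α : Type*} {G' : MixedGraph (α ⊕ α)} {B : α}

lemma mdir_iff_hdir {u v : α ⊕ α} (hu : u ≠ Sum.inl B) (hv : v ≠ Sum.inl B) :
    (marg G' (Sum.inl B)).dir u v ↔ (hyb G' B).dir u v := by
  rw [hdir_def]
  constructor
  · exact Or.inl
  · rintro (h1 | ⟨(h1 | h1), h2⟩)
    · exact h1
    · exact absurd h1 hu
    · exact absurd h1 hv

lemma mundir_iff_hundir {u v : α ⊕ α} (hu : u ≠ Sum.inl B) (hv : v ≠ Sum.inl B) :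
    (marg G' (Sum.inl B)).undir u v ↔ (hyb G' B).undir u v := by
  rw [hundir_def]
  exact ⟨fun h => h.2.2, fun h => ⟨hu, hv, h⟩⟩

lemma madj_iff_hadj {u v : α ⊕ α} (hu : u ≠ Sum.inl B) (hv : v ≠ Sum.inl B) :
    (marg G' (Sum.inl B)).adj u v ↔ (hyb G' B).adj u v := by
  unfold MixedGraph.adj
  rw [mdir_iff_hdir hu hv, mdir_iff_hdir hv hu, mundir_iff_hundir hu hv]

lemma mtriplex_iff_htriplex {X Y Z : α ⊕ α} (hX : X ≠ Sum.inl B) (hY : Y ≠ Sum.inl B)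
    (hZ : Z ≠ Sum.inl B) :
    (marg G' (Sum.inl B)).triplex X Y Z ↔ (hyb G' B).triplex X Y Z := by
  unfold MixedGraph.triplex
  rw [mdir_iff_hdir hX hY, mdir_iff_hdir hZ hY, mundir_iff_hundir hX hY,
    mundir_iff_hundir hY hZ]

lemma mnontriplex_iff_hnontriplex {X Y Z : α ⊕ α} (hX : X ≠ Sum.inl B) (hY : Y ≠ Sum.inl B)
    (hZ : Z ≠ Sum.inl B) :
    (marg G' (Sum.inl B)).nontriplex X Y Z ↔ (hyb G' B).nontriplex X Y Z := by
  unfold MixedGraph.nontriplex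
  rw [madj_iff_hadj hX hY, madj_iff_hadj hY hZ, mtriplex_iff_htriplex hX hY hZ]

lemma chain_to_marg : ∀ {t : List (α ⊕ α)}, Sum.inl B ∉ t → t.Chain' (hyb G' B).adj →
    t.Chain' (marg G' (Sum.inl B)).adj
  | [], _, _ => List.IsChain.nil
  | [x], _, _ => List.IsChain.singleton x
  | x :: y :: rest, hmem, hc => by
    simp only [List.Chain', List.isChain_cons_cons] at hc ⊢
    refine ⟨(madj_iff_hadj ?_ ?_).mpr hc.1, chain_to_marg ?_ hc.2⟩
    · intro hx; exact hmem (hx ▸ (List.mem_cons_self (a := x) (l := _)))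
    · intro hy; exact hmem (by simp [hy])
    · intro hm; exact hmem (by simp [hm])

end Stmt16Marg
section Stmt16Config
open MixedGraph
variable {α : Type*} {G' : MixedGraph (α ⊕ α)} {B : α}

lemma hundir_not_inl_left (h : IsEAMPStruct G') {s : α} {v : α ⊕ α} :
    ¬ (hyb G' B).undir (Sum.inl s) v := by
  intro hu; obtain ⟨⟨y, hy⟩, -⟩ := undir_inr h (hundir_def.mp hu); exact absurd hy (by simp)

lemma hundir_not_inl_right (h : IsEAMPStruct G') {s : α} {v : α ⊕ α} :
    ¬ (hyb G' B).undir v (Sum.inl s) := by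
  intro hu; obtain ⟨-, y, hy⟩ := undir_inr h (hundir_def.mp hu); exact absurd hy (by simp)

section Config1
variable (h : IsEAMPStruct G') {x C : α ⊕ α}
  (dxB : G'.dir x (Sum.inl B)) (dBC : G'.dir (Sum.inl B) C)
include h dxB dBC

lemma c1_ndir_Cx : ¬ (hyb G' B).dir C x := by
  intro hd
  rcases hdir_cases hd with h1 | ⟨h1, h2⟩
  · exact no3 h dxB dBC h1
  · exact no2 h dBC h1

lemma c1_nundir_xC : ¬ (hyb G' B).undir x C := by
  intro hu; obtain ⟨-, y, rfl⟩ := undir_inr h (hundir_def.mp hu); exact noDirInr h dBC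

lemma C1a (w : α ⊕ α) :
    (hyb G' B).triplex w x C ↔ (hyb G' B).triplex w x (Sum.inl B) := by
  have e1 := c1_ndir_Cx h dxB dBC
  have e2 := c1_nundir_xC h dxB dBC
  have e3 : ¬ (hyb G' B).dir (Sum.inl B) x := fun hd => no2 h dxB (hdir_Bn_left.mp hd)
  have e4 : ¬ (hyb G' B).undir x (Sum.inl B) := hundir_not_Bn_right h
  simp only [MixedGraph.triplex]
  simp [e1, e2, e3, e4]

lemma C1b (t3 : α ⊕ α) :
    (hyb G' B).triplex x C t3 ↔ (hyb G' B).triplex (Sum.inl B) C t3 := by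
  have f1 : (hyb G' B).dir x C := hdir_chain h dxB dBC
  have f2 : (hyb G' B).dir (Sum.inl B) C := hdir_Bn_left.mpr dBC
  have f5 := c1_nundir_xC h dxB dBC
  have f6 : ¬ (hyb G' B).undir (Sum.inl B) C := hundir_not_Bn_left h
  simp only [MixedGraph.triplex]
  simp [f1, f2, f5, f6]

end Config1

section Config2
variable (h : IsEAMPStruct G') {x C : α ⊕ α}
  (dBx : G'.dir (Sum.inl B) x) (dCB : G'.dir C (Sum.inl B))
include h dBx dCB

lemma c2_x_inl : ∃ s, x = Sum.inl s := by
  cases x with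
  | inl s => exact ⟨s, rfl⟩
  | inr s => exact absurd dBx (noDirInr h)

lemma C2a (w : α ⊕ α) :
    (hyb G' B).triplex w x C ↔ (hyb G' B).triplex w x (Sum.inl B) := by
  obtain ⟨s, rfl⟩ := c2_x_inl h dBx dCB
  have f1 : (hyb G' B).dir C (Sum.inl s) := hdir_chain h dCB dBx
  have f2 : (hyb G' B).dir (Sum.inl B) (Sum.inl s) := hdir_Bn_left.mpr dBx
  have f3 : ∀ v : α ⊕ α, ¬ (hyb G' B).undir (Sum.inl s) v := fun _ => hundir_not_inl_left h
  simp only [MixedGraph.triplex]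
  simp [f1, f2, f3]

lemma C2b (t3 : α ⊕ α) :
    (hyb G' B).triplex x C t3 ↔ (hyb G' B).triplex (Sum.inl B) C t3 := by
  obtain ⟨s, rfl⟩ := c2_x_inl h dBx dCB
  have f1 : ¬ (hyb G' B).dir (Sum.inl s) C := by
    intro hd
    rcases hdir_cases hd with h1 | ⟨h1, h2⟩
    · exact no3 h dCB dBx h1
    · exact no2 h dBx h1
  have f2 : ¬ (hyb G' B).dir (Sum.inl B) C := fun hd => no2 h dCB (hdir_Bn_left.mp hd)
  have f3 : ∀ v : α ⊕ α, ¬ (hyb G' B).undir (Sum.inl s) v := fun _ => hundir_not_inl_left h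
  have f4 : ¬ (hyb G' B).undir (Sum.inl B) C := hundir_not_Bn_left h
  simp only [MixedGraph.triplex]
  simp [f1, f2, f3, f4]

end Config2

section Config3
variable (h : IsEAMPStruct G') (hedge : G'.dir (Sum.inr B) (Sum.inl B)) {x C : α ⊕ α}
  (dBx : G'.dir (Sum.inl B) x) (dBC : G'.dir (Sum.inl B) C)
include h hedge dBx dBC

lemma C3e1 : (hyb G' B).dir (Sum.inr B) x := hdir_chain h hedge dBx

lemma C3e2 : (hyb G' B).dir (Sum.inr B) C := hdir_chain h hedge dBC

lemma C3a (w : α ⊕ α) :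
    (hyb G' B).triplex w x (Sum.inr B) ↔ (hyb G' B).triplex w x (Sum.inl B) := by
  obtain ⟨s, rfl⟩ : ∃ s, x = Sum.inl s := by
    cases x with
    | inl s => exact ⟨s, rfl⟩
    | inr s => exact absurd dBx (noDirInr h)
  have f1 : (hyb G' B).dir (Sum.inr B) (Sum.inl s) := C3e1 h hedge dBx dBC
  have f2 : (hyb G' B).dir (Sum.inl B) (Sum.inl s) := hdir_Bn_left.mpr dBx
  have f3 : ∀ v : α ⊕ α, ¬ (hyb G' B).undir (Sum.inl s) v := fun _ => hundir_not_inl_left h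
  simp only [MixedGraph.triplex]
  simp [f1, f2, f3]

lemma C3b (t3 : α ⊕ α) :
    (hyb G' B).triplex (Sum.inr B) C t3 ↔ (hyb G' B).triplex (Sum.inl B) C t3 := by
  have f1 : (hyb G' B).dir (Sum.inr B) C := C3e2 h hedge dBx dBC
  have f2 : (hyb G' B).dir (Sum.inl B) C := hdir_Bn_left.mpr dBC
  have f3 : ¬ (hyb G' B).undir (Sum.inr B) C := by
    obtain ⟨s, rfl⟩ : ∃ s, C = Sum.inl s := by
      cases C with
      | inl s => exact ⟨s, rfl⟩
      | inr s => exact absurd dBC (noDirInr h)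
    exact hundir_not_inl_right h
  have f4 : ¬ (hyb G' B).undir (Sum.inl B) C := hundir_not_Bn_left h
  simp only [MixedGraph.triplex]
  simp [f1, f2, f3, f4]

lemma C3c : ¬ (hyb G' B).triplex x (Sum.inr B) C := by
  have f1 : ¬ (hyb G' B).dir x (Sum.inr B) := hdir_not_inr h
  have f2 : ¬ (hyb G' B).undir x (Sum.inr B) := by
    obtain ⟨s, rfl⟩ : ∃ s, x = Sum.inl s := by
      cases x with
      | inl s => exact ⟨s, rfl⟩
      | inr s => exact absurd dBx (noDirInr h)
    exact hundir_not_inl_left h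
  simp only [MixedGraph.triplex]
  simp [f1, f2]

end Config3
end Stmt16Config
section Stmt16Inv
open MixedGraph
variable {α : Type*} (G' : MixedGraph (α ⊕ α)) (B : α) (D : Set (α ⊕ α))

/-- Invariant carried through the recursion. -/
def TrInv (l : List (α ⊕ α)) : Prop :=
  l.head? ≠ some (Sum.inl B) ∧
  l.getLast? ≠ some (Sum.inl B) ∧
  l.Chain' (hyb G' B).adj ∧
  (∀ X C, [X, Sum.inl B, C] <:+: l → ¬ (hyb G' B).triplex X (Sum.inl B) C) ∧
  (∀ X Y C, [X, Y, C] <:+: l → (hyb G' B).triplex X Y C → Y ∈ D) ∧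
  (∀ X Y C, [X, Y, C] <:+: l → (hyb G' B).nontriplex X Y C → Y ∉ D)

/-- Conclusion of the main induction. -/
def TrConcl (l : List (α ⊕ α)) : Prop :=
  (tr G' B l).head? = l.head? ∧
  (tr G' B l).getLast? = l.getLast? ∧
  Sum.inl B ∉ tr G' B l ∧
  (tr G' B l).Chain' (hyb G' B).adj ∧
  (∀ X Y C, [X, Y, C] <:+: tr G' B l →
    ((hyb G' B).triplex X Y C → Y ∈ D) ∧ ((hyb G' B).nontriplex X Y C → Y ∉ D)) ∧
  (∀ t2, (tr G' B l).tail.head? = some t2 → ∃ y2, l.tail.head? = some y2 ∧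
    ∀ x1, l.head? = some x1 →
      (hyb G' B).adj x1 t2 ∧ (∀ w, (hyb G' B).triplex w x1 t2 ↔ (hyb G' B).triplex w x1 y2))

variable {G' B D}

lemma infix_cons_lift {a : α ⊕ α} {s t : List (α ⊕ α)} (hst : s <:+: t) : s <:+: a :: t :=
  hst.trans (List.suffix_cons a t).isInfix

lemma TrInv.tail {x : α ⊕ α} {t : List (α ⊕ α)} (hInv : TrInv G' B D (x :: t))
    (ht : t.head? ≠ some (Sum.inl B)) : TrInv G' B D t := by
  obtain ⟨h1, h2, h3, h4, h5, h6⟩ := hInv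
  refine ⟨ht, ?_, h3.tail, fun X C hi => h4 X C (infix_cons_lift hi),
    fun X Y C hi => h5 X Y C (infix_cons_lift hi),
    fun X Y C hi => h6 X Y C (infix_cons_lift hi)⟩
  cases t with
  | nil => simp
  | cons y r => rwa [List.getLast?_cons_cons] at h2

lemma TrInv.replaceHead (h : IsEAMPStruct G') {x C z : α ⊕ α} {r' : List (α ⊕ α)}
    (hInv : TrInv G' B D (x :: Sum.inl B :: C :: r'))
    (hz : z ≠ Sum.inl B) (hC : C ≠ Sum.inl B)
    (hadj : (hyb G' B).adj z C)
    (hiff : ∀ t3, (hyb G' B).triplex z C t3 ↔ (hyb G' B).triplex (Sum.inl B) C t3) :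
    TrInv G' B D (z :: C :: r') := by
  obtain ⟨h1, h2, h3, h4, h5, h6⟩ := hInv
  have hadjBC : (hyb G' B).adj (Sum.inl B) C := (List.isChain_cons_cons.mp h3.tail).1
  refine ⟨by simp [hz], ?_, ?_, ?_, ?_, ?_⟩
  · rw [List.getLast?_cons_cons]
    rwa [List.getLast?_cons_cons, List.getLast?_cons_cons] at h2
  · exact List.isChain_cons_cons.mpr ⟨hadj, h3.tail.tail⟩
  · intro X C' hinf
    rcases List.infix_cons_iff.mp hinf with hp | hi
    · obtain ⟨-, hp2⟩ := List.cons_prefix_cons.mp hp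
      obtain ⟨hBC, -⟩ := List.cons_prefix_cons.mp hp2
      exact absurd hBC.symm hC
    · exact h4 X C' (infix_cons_lift (infix_cons_lift hi))
  · intro X Y C' hinf htr
    rcases List.infix_cons_iff.mp hinf with hp | hi
    · obtain ⟨hXz, hp2⟩ := List.cons_prefix_cons.mp hp
      obtain ⟨hYC, hp3⟩ := List.cons_prefix_cons.mp hp2
      obtain ⟨ts, rfl⟩ : ∃ ts, r' = C' :: ts := by
        obtain ⟨t, ht⟩ := hp3; exact ⟨t, ht.symm⟩
      subst hXz
      rw [hYC] at htr ⊢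
      exact h5 (Sum.inl B) C C' ⟨[x], ts, rfl⟩ ((hiff C').mp htr)
    · exact h5 X Y C' (infix_cons_lift (infix_cons_lift hi)) htr
  · intro X Y C' hinf hnt
    rcases List.infix_cons_iff.mp hinf with hp | hi
    · obtain ⟨hXz, hp2⟩ := List.cons_prefix_cons.mp hp
      obtain ⟨hYC, hp3⟩ := List.cons_prefix_cons.mp hp2
      obtain ⟨ts, rfl⟩ : ∃ ts, r' = C' :: ts := by
        obtain ⟨t, ht⟩ := hp3; exact ⟨t, ht.symm⟩
      subst hXz
      rw [hYC] at hnt ⊢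
      exact h6 (Sum.inl B) C C' ⟨[x], ts, rfl⟩
        ⟨hadjBC, hnt.2.1, fun ht => hnt.2.2 ((hiff C').mpr ht)⟩
    · exact h6 X Y C' (infix_cons_lift (infix_cons_lift hi)) hnt

end Stmt16Inv
section Stmt16Main
open MixedGraph
variable {α : Type*} {G' : MixedGraph (α ⊕ α)} {B : α} {D : Set (α ⊕ α)}

lemma trConcl_nil : TrConcl G' B D [] := by
  refine ⟨by rw [tr_nil], by rw [tr_nil], by rw [tr_nil]; simp, by rw [tr_nil]; exact List.IsChain.nil,
    ?_, ?_⟩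
  · intro X Y C hinf
    rw [tr_nil] at hinf
    have := hinf.sublist.length_le
    simp at this
  · intro t2 ht2
    rw [tr_nil] at ht2
    simp at ht2

lemma trConcl_single {x : α ⊕ α} (hx : x ≠ Sum.inl B) : TrConcl G' B D [x] := by
  refine ⟨by rw [tr_single], by rw [tr_single], ?_, by rw [tr_single]; exact List.IsChain.singleton x, ?_, ?_⟩
  · rw [tr_single]
    simp only [List.mem_singleton]
    exact fun hh => hx hh.symm
  · intro X Y C hinf
    rw [tr_single] at hinf
    have := hinf.sublist.length_le
    simp at this
  · intro t2 ht2
    rw [tr_single] at ht2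
    simp at ht2

lemma trMain (h : IsEAMPStruct G') (hedge : G'.dir (Sum.inr B) (Sum.inl B))
    (hεB : Sum.inr B ∉ D) :
    ∀ (n : ℕ) (l : List (α ⊕ α)), l.length ≤ n → TrInv G' B D l → TrConcl G' B D l := by
  intro n
  induction n with
  | zero =>
    intro l hlen _
    have : l = [] := List.length_eq_zero_iff.mp (Nat.le_zero.mp hlen)
    subst this
    exact trConcl_nil
  | succ n ih =>
    intro l hlen hInv
    match l with
    | [] => exact trConcl_nil
    | [x] =>
      exact trConcl_single (fun hh => hInv.1 (by simp [hh]))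
    | x :: y :: rest =>
      have hx : x ≠ Sum.inl B := fun hh => hInv.1 (by simp [hh])
      have hchain := hInv.2.2.1
      have hadjxy : (hyb G' B).adj x y := (List.isChain_cons_cons.mp hchain).1
      by_cases hy : y = Sum.inl B
      · -- y is the node being eliminated
        subst hy
        cases rest with
        | nil =>
          exact absurd (by simp : (x :: [Sum.inl B]).getLast? = some (Sum.inl B)) hInv.2.1
        | cons C r' =>
          have hadjBC : (hyb G' B).adj (Sum.inl B) C := (List.isChain_cons_cons.mp hchain.tail).1
          have hC : C ≠ Sum.inl B := by
            rintro rfl; exact hadj_irrefl h hadjBC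
          rcases hadj_Bn_right h hadjxy with dxB | dBx
          · -- case A : x → B, so B → C
            have dBC : G'.dir (Sum.inl B) C := by
              rcases hadj_Bn_left h hadjBC with hd | hd
              · exact hd
              · exact absurd (Or.inl ⟨hdir_Bn_right.mpr dxB, hdir_Bn_right.mpr hd⟩)
                  (hInv.2.2.2.1 x C ⟨[], r', rfl⟩)
            have hInv' : TrInv G' B D (x :: C :: r') :=
              TrInv.replaceHead h hInv hx hC (Or.inl (hdir_chain h dxB dBC)) (C1b h dxB dBC)
            obtain ⟨ih1, ih2, ih3, ih4, ih5, ih6⟩ :=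
              ih (x :: C :: r') (by simp at hlen ⊢; omega) hInv'
            have htreq : tr G' B (x :: Sum.inl B :: C :: r') = tr G' B (x :: C :: r') :=
              tr_drop1 G' B (C :: r') dxB
            refine ⟨?_, ?_, ?_, ?_, ?_, ?_⟩
            · rw [htreq, ih1]; rfl
            · rw [htreq, ih2]; simp [List.getLast?_cons_cons]
            · rw [htreq]; exact ih3
            · rw [htreq]; exact ih4
            · rw [htreq]; exact ih5
            · intro t2 ht2
              rw [htreq] at ht2
              obtain ⟨y2', hy2', hmain⟩ := ih6 t2 ht2
              have hy2C : y2' = C := by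
                  simp only [List.tail_cons, List.head?_cons, Option.some_inj] at hy2'
                  exact hy2'.symm
              subst hy2C
              refine ⟨Sum.inl B, by simp, ?_⟩
              intro x1 hx1
              have hx1x : x1 = x := by
                  simp only [List.head?_cons, Option.some_inj] at hx1
                  exact hx1.symm
              rw [hx1x]
              obtain ⟨hadj2, hiff2⟩ := hmain x (by simp)
              exact ⟨hadj2, fun w => (hiff2 w).trans (C1a h dxB dBC w)⟩
          · by_cases hCB : G'.dir C (Sum.inl B)
            · -- case B1 : x ← B ← C
              have hndxB : ¬ G'.dir x (Sum.inl B) := no2 h dBx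
              have hInv' : TrInv G' B D (x :: C :: r') :=
                TrInv.replaceHead h hInv hx hC (Or.inr (Or.inl (hdir_chain h hCB dBx)))
                  (C2b h dBx hCB)
              obtain ⟨ih1, ih2, ih3, ih4, ih5, ih6⟩ :=
                ih (x :: C :: r') (by simp at hlen ⊢; omega) hInv'
              have htreq : tr G' B (x :: Sum.inl B :: C :: r') = tr G' B (x :: C :: r') :=
                tr_drop2 G' B r' hndxB hCB
              refine ⟨?_, ?_, ?_, ?_, ?_, ?_⟩
              · rw [htreq, ih1]; rfl
              · rw [htreq, ih2]; simp [List.getLast?_cons_cons]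
              · rw [htreq]; exact ih3
              · rw [htreq]; exact ih4
              · rw [htreq]; exact ih5
              · intro t2 ht2
                rw [htreq] at ht2
                obtain ⟨y2', hy2', hmain⟩ := ih6 t2 ht2
                have hy2C : y2' = C := by
                  simp only [List.tail_cons, List.head?_cons, Option.some_inj] at hy2'
                  exact hy2'.symm
                subst hy2C
                refine ⟨Sum.inl B, by simp, ?_⟩
                intro x1 hx1
                have hx1x : x1 = x := by
                  simp only [List.head?_cons, Option.some_inj] at hx1
                  exact hx1.symm
                rw [hx1x]
                obtain ⟨hadj2, hiff2⟩ := hmain x (by simp)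
                exact ⟨hadj2, fun w => (hiff2 w).trans (C2a h dBx hCB w)⟩
            · -- case B2 : x ← B → C
              have hndxB : ¬ G'.dir x (Sum.inl B) := no2 h dBx
              have dBC : G'.dir (Sum.inl B) C := by
                rcases hadj_Bn_left h hadjBC with hd | hd
                · exact hd
                · exact absurd hd hCB
              have hInv' : TrInv G' B D (Sum.inr B :: C :: r') :=
                TrInv.replaceHead h hInv (by simp) hC
                  (Or.inl (C3e2 h hedge dBx dBC)) (C3b h hedge dBx dBC)
              obtain ⟨ih1, ih2, ih3, ih4, ih5, ih6⟩ :=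
                ih (Sum.inr B :: C :: r') (by simp at hlen ⊢; omega) hInv'
              have htreq : tr G' B (x :: Sum.inl B :: C :: r')
                  = x :: tr G' B (Sum.inr B :: C :: r') := tr_subst G' B r' hndxB hCB
              obtain ⟨ts, hT⟩ : ∃ ts, tr G' B (Sum.inr B :: C :: r') = Sum.inr B :: ts := by
                cases hTT : tr G' B (Sum.inr B :: C :: r') with
                | nil => rw [hTT] at ih1; simp at ih1
                | cons t tt =>
                  rw [hTT] at ih1
                  simp only [List.head?_cons, Option.some_inj] at ih1
                  exact ⟨tt, by rw [ih1]⟩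
              have hadjxε : (hyb G' B).adj x (Sum.inr B) :=
                Or.inr (Or.inl (C3e1 h hedge dBx dBC))
              refine ⟨?_, ?_, ?_, ?_, ?_, ?_⟩
              · rw [htreq]; rfl
              · rw [htreq, hT, List.getLast?_cons_cons, ← hT, ih2]
                simp [List.getLast?_cons_cons]
              · rw [htreq]
                simp only [List.mem_cons]
                rintro (hh | hh)
                · exact hx hh.symm
                · exact ih3 hh
              · rw [htreq, hT]
                rw [hT] at ih4
                exact List.isChain_cons_cons.mpr ⟨hadjxε, ih4⟩
              · intro X Y C' hinf
                rw [htreq] at hinf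
                rcases List.infix_cons_iff.mp hinf with hp | hi
                · rw [hT] at hp
                  obtain ⟨hXx, hp2⟩ := List.cons_prefix_cons.mp hp
                  obtain ⟨hYε, hp3⟩ := List.cons_prefix_cons.mp hp2
                  obtain ⟨ts', rfl⟩ : ∃ ts', ts = C' :: ts' := by
                    obtain ⟨t, ht⟩ := hp3; exact ⟨t, ht.symm⟩
                  obtain ⟨y2, hy2, hmain⟩ := ih6 C' (by rw [hT]; rfl)
                  have hy2C : y2 = C := by
                    simp only [List.tail_cons, List.head?_cons, Option.some_inj] at hy2
                    exact hy2.symm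
                  subst hy2C
                  obtain ⟨hadjt, hiffw⟩ := hmain (Sum.inr B) (by simp)
                  rw [hXx, hYε]
                  constructor
                  · intro htr
                    exact absurd ((hiffw x).mp htr) (C3c h hedge dBx dBC)
                  · intro _
                    exact hεB
                · exact ih5 X Y C' hi
              · intro t2 ht2
                rw [htreq, hT] at ht2
                simp only [List.tail_cons, List.head?_cons, Option.some_inj] at ht2
                refine ⟨Sum.inl B, by simp, ?_⟩
                intro x1 hx1
                have hx1x : x1 = x := by
                  simp only [List.head?_cons, Option.some_inj] at hx1
                  exact hx1.symm
                rw [hx1x, ← ht2]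
                exact ⟨hadjxε, fun w => C3a h hedge dBx dBC w⟩
      · -- ordinary step: y is kept
        have hInvT : TrInv G' B D (y :: rest) := hInv.tail (by simp [hy])
        obtain ⟨ih1, ih2, ih3, ih4, ih5, ih6⟩ :=
          ih (y :: rest) (by simp at hlen ⊢; omega) hInvT
        have htreq : tr G' B (x :: y :: rest) = x :: tr G' B (y :: rest) :=
          tr_cons_ne G' B x rest hy
        obtain ⟨ts, hT⟩ : ∃ ts, tr G' B (y :: rest) = y :: ts := by
          cases hTT : tr G' B (y :: rest) with
          | nil => rw [hTT] at ih1; simp at ih1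
          | cons t tt =>
            rw [hTT] at ih1
            simp only [List.head?_cons, Option.some_inj] at ih1
            exact ⟨tt, by rw [ih1]⟩
        refine ⟨?_, ?_, ?_, ?_, ?_, ?_⟩
        · rw [htreq]; rfl
        · rw [htreq, hT, List.getLast?_cons_cons, ← hT, ih2, List.getLast?_cons_cons]
        · rw [htreq]
          simp only [List.mem_cons]
          rintro (hh | hh)
          · exact hx hh.symm
          · exact ih3 hh
        · rw [htreq, hT]
          rw [hT] at ih4
          exact List.isChain_cons_cons.mpr ⟨hadjxy, ih4⟩
        · intro X Y C hinf
          rw [htreq] at hinf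
          rcases List.infix_cons_iff.mp hinf with hp | hi
          · rw [hT] at hp
            obtain ⟨hXx, hp2⟩ := List.cons_prefix_cons.mp hp
            obtain ⟨hYy, hp3⟩ := List.cons_prefix_cons.mp hp2
            obtain ⟨ts', rfl⟩ : ∃ ts', ts = C :: ts' := by
              obtain ⟨t, ht⟩ := hp3; exact ⟨t, ht.symm⟩
            obtain ⟨y2, hy2, hmain⟩ := ih6 C (by rw [hT]; rfl)
            obtain ⟨r2, hrest⟩ : ∃ r2, rest = y2 :: r2 := by
              cases rest with
              | nil => simp at hy2
              | cons z r2 =>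
                simp only [List.tail_cons, List.head?_cons, Option.some_inj] at hy2
                exact ⟨r2, by rw [hy2]⟩
            obtain ⟨hadjt, hiffw⟩ := hmain y (by simp)
            have hinfl : [x, y, y2] <:+: x :: y :: rest := by
              rw [hrest]; exact ⟨[], r2, rfl⟩
            have hadjyy2 : (hyb G' B).adj y y2 := by
              have h2 := hchain.tail
              rw [hrest] at h2
              exact (List.isChain_cons_cons.mp h2).1
            rw [hXx, hYy]
            constructor
            · intro htr
              exact hInv.2.2.2.2.1 x y y2 hinfl ((hiffw x).mp htr)
            · intro hnt
              exact hInv.2.2.2.2.2 x y y2 hinfl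
                ⟨hnt.1, hadjyy2, fun ht => hnt.2.2 ((hiffw x).mpr ht)⟩
          · exact ih5 X Y C hi
        · intro t2 ht2
          rw [htreq, hT] at ht2
          simp only [List.tail_cons, List.head?_cons, Option.some_inj] at ht2
          refine ⟨y, by simp, ?_⟩
          intro x1 hx1
          have hx1x : x1 = x := by
                  simp only [List.head?_cons, Option.some_inj] at hx1
                  exact hx1.symm
          rw [hx1x, ← ht2]
          exact ⟨hadjxy, fun w => Iff.rfl⟩

end Stmt16Main
/-- in an EAMP CG G', a node `B ∈ W` that is neither an endpoint
nor a triplex node of a D-open route can only occur in the configurations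
`A → B → C`, `A ← B ← C`, or `A ← B → C`, and the route can be transformed into
a D-open route of the marginalized graph `[G']_{B}` (using `ε^B ∉ D(Z)` since
`B ∉ Z`). -/
theorem stmt16 {α : Type*} (G' : MixedGraph (α ⊕ α)) (h : IsEAMPStruct G') (B : α)
    (hedge : G'.dir (Sum.inr B) (Sum.inl B))
    (D : Set (α ⊕ α)) (hεB : Sum.inr B ∉ D)
    (a b : α ⊕ α) (haB : a ≠ Sum.inl B) (hbB : b ≠ Sum.inl B)
    (l : List (α ⊕ α)) (hl : G'.AMPOpenRoute D l)
    (ha : l.head? = some a) (hb : l.getLast? = some b)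
    (htrip : ∀ A C, [A, Sum.inl B, C] <:+: l → ¬ G'.triplex A (Sum.inl B) C) :
    (∀ A C, [A, Sum.inl B, C] <:+: l →
      (G'.dir A (Sum.inl B) ∧ G'.dir (Sum.inl B) C) ∨
      (G'.dir (Sum.inl B) A ∧ G'.dir C (Sum.inl B)) ∨
      (G'.dir (Sum.inl B) A ∧ G'.dir (Sum.inl B) C)) ∧
    ∃ l', l'.head? = some a ∧ l'.getLast? = some b ∧
      (marg G' (Sum.inl B)).AMPOpenRoute D l' := by
  have hchainG : l.Chain' G'.adj := hl.1.2
  have hundir_resolve : ∀ u v : α ⊕ α, G'.adj u v →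
      (v = Sum.inl B → G'.dir u v ∨ G'.dir v u) ∧
      (u = Sum.inl B → G'.dir u v ∨ G'.dir v u) := by
    intro u v hadj
    constructor
    · rintro rfl
      rcases hadj with h1 | h1 | h1
      · exact Or.inl h1
      · exact Or.inr h1
      · obtain ⟨-, y, hy⟩ := undir_inr h h1; exact absurd hy (by simp)
    · rintro rfl
      rcases hadj with h1 | h1 | h1
      · exact Or.inl h1
      · exact Or.inr h1
      · obtain ⟨⟨y, hy⟩, -⟩ := undir_inr h h1; exact absurd hy (by simp)
  have part1 : ∀ A C, [A, Sum.inl B, C] <:+: l →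
      (G'.dir A (Sum.inl B) ∧ G'.dir (Sum.inl B) C) ∨
      (G'.dir (Sum.inl B) A ∧ G'.dir C (Sum.inl B)) ∨
      (G'.dir (Sum.inl B) A ∧ G'.dir (Sum.inl B) C) := by
    intro A C hinf
    have hch3 := hchainG.infix hinf
    have hadjAB : G'.adj A (Sum.inl B) := (List.isChain_cons_cons.mp hch3).1
    have hadjBC : G'.adj (Sum.inl B) C := (List.isChain_cons_cons.mp hch3.tail).1
    rcases (hundir_resolve A (Sum.inl B) hadjAB).1 rfl with d1 | d1 <;>
      rcases (hundir_resolve (Sum.inl B) C hadjBC).2 rfl with d2 | d2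
    · exact Or.inl ⟨d1, d2⟩
    · exact absurd (Or.inl ⟨d1, d2⟩ : G'.triplex A (Sum.inl B) C) (htrip A C hinf)
    · exact Or.inr (Or.inr ⟨d1, d2⟩)
    · exact Or.inr (Or.inl ⟨d1, d2⟩)
  refine ⟨part1, ?_⟩
  have hInv : TrInv G' B D l := by
    refine ⟨by rw [ha]; simpa using haB, by rw [hb]; simpa using hbB,
      List.IsChain.imp (fun u v huv => hadj_of_adj h huv) hchainG, ?_, ?_, ?_⟩
    · intro X C hinf
      have hch3 := hchainG.infix hinf
      have hadjXB : G'.adj X (Sum.inl B) := (List.isChain_cons_cons.mp hch3).1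
      have hadjBC : G'.adj (Sum.inl B) C := (List.isChain_cons_cons.mp hch3.tail).1
      rw [htriplex_iff_of_adj h hadjXB hadjBC]
      exact htrip X C hinf
    · intro X Y C hinf htr
      have hch3 := hchainG.infix hinf
      have hadjXY : G'.adj X Y := (List.isChain_cons_cons.mp hch3).1
      have hadjYC : G'.adj Y C := (List.isChain_cons_cons.mp hch3.tail).1
      exact hl.2.1 X Y C hinf ((htriplex_iff_of_adj h hadjXY hadjYC).mp htr)
    · intro X Y C hinf hnt
      have hch3 := hchainG.infix hinf
      have hadjXY : G'.adj X Y := (List.isChain_cons_cons.mp hch3).1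
      have hadjYC : G'.adj Y C := (List.isChain_cons_cons.mp hch3.tail).1
      exact hl.2.2 X Y C hinf (hnontriplex_of_adj h hadjXY hadjYC hnt)
  obtain ⟨c1, c2, c3, c4, c5, c6⟩ := trMain h hedge hεB l.length l le_rfl hInv
  have hne : Sum.inl B ∉ tr G' B l := c3
  refine ⟨tr G' B l, by rw [c1, ha], by rw [c2, hb], ⟨?_, chain_to_marg hne c4⟩, ?_, ?_⟩
  · intro hnil
    rw [hnil, ha] at c1
    simp at c1
  · intro X Y C hinf htr
    have hX : X ≠ Sum.inl B := fun e => hne (e ▸ hinf.subset (by simp))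
    have hY : Y ≠ Sum.inl B := fun e => hne (e ▸ hinf.subset (by simp))
    have hC : C ≠ Sum.inl B := fun e => hne (e ▸ hinf.subset (by simp))
    exact (c5 X Y C hinf).1 ((mtriplex_iff_htriplex hX hY hC).mp htr)
  · intro X Y C hinf hnt
    have hX : X ≠ Sum.inl B := fun e => hne (e ▸ hinf.subset (by simp))
    have hY : Y ≠ Sum.inl B := fun e => hne (e ▸ hinf.subset (by simp))
    have hC : C ≠ Sum.inl B := fun e => hne (e ▸ hinf.subset (by simp))
    exact (c5 X Y C hinf).2 ((mnontriplex_iff_hnontriplex hX hY hC).mp hnt)
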